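/- arXiv:0809.4627 — 6 statements merged into one kernel-verified Lean document; each statement's English description precedes it below -/
import Mathlib

section
/- Let n ≥ 2 and let P = (p_ij) be an n×n matrix with positive entries summing to n², at which the function L(P) = ∏_i p_ii² · ∏_{i≠j} p_ij attains its maximum over all nonnegative n×n matrices of rank at most 2 with entries summing to n². Then every row sum and every column sum of P equals n. -/
open Finset

open Matrix

/-- The likelihood function `L(P) = ∏ i p_ii² · ∏_{i≠j} p_ij`. -/
noncomputable def swissL {n : ℕ} (P : Matrix (Fin n) (Fin n) ℝ) : ℝ :=
  (∏ i, (P i i) ^ 2) * ∏ p ∈ Finset.univ.offDiag, P p.1 p.2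

lemma prod_diag_aux {n : ℕ} (f : Fin n → Fin n → ℝ) :
    ∏ p ∈ (Finset.univ : Finset (Fin n)).diag, f p.1 p.2 = ∏ i, f i i := by
  apply Finset.prod_nbij' (fun p => p.1) (fun i => (i, i)) <;>
    simp +contextual [Finset.mem_diag, Prod.ext_iff]

lemma swissL_eq {n : ℕ} (P : Matrix (Fin n) (Fin n) ℝ) :
    swissL P = (∏ i, P i i) * ∏ i, ∏ j, P i j := by
  have h : ∏ i, ∏ j, P i j = (∏ i, P i i) * ∏ p ∈ Finset.univ.offDiag, P p.1 p.2 := by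
    rw [← Finset.prod_product' (f := P)]
    rw [← Finset.diag_union_offDiag (Finset.univ : Finset (Fin n)),
      Finset.prod_union (Finset.disjoint_diag_offDiag _), prod_diag_aux P]
  rw [swissL, h, Finset.prod_pow]; ring

lemma swissL_row_smul {n : ℕ} (c : Fin n → ℝ) (P : Matrix (Fin n) (Fin n) ℝ) :
    swissL (Matrix.of fun i j => c i * P i j) = (∏ i, c i) ^ (n + 1) * swissL P := by
  rw [swissL_eq, swissL_eq]
  simp only [Matrix.of_apply, Finset.prod_mul_distrib, Finset.prod_const,
    Finset.card_univ, Fintype.card_fin, Finset.prod_pow]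
  ring

lemma swissL_transpose {n : ℕ} (P : Matrix (Fin n) (Fin n) ℝ) :
    swissL Pᵀ = swissL P := by
  rw [swissL_eq, swissL_eq]
  simp only [Matrix.transpose_apply]
  rw [Finset.prod_comm]

lemma strict_amgm {n : ℕ} (hn : 0 < n) (s : Fin n → ℝ) (hs : ∀ i, 0 < s i)
    (hsum : ∑ i, s i = (n : ℝ) ^ 2) (j k : Fin n) (hjk : s j ≠ s k) :
    ∏ i, s i < (n : ℝ) ^ n := by
  have hn' : (0 : ℝ) < n := by exact_mod_cast hn
  have jensen := strictConcaveOn_log_Ioi.lt_map_sum (t := Finset.univ)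
    (w := fun _ => 1 / (n : ℝ)) (p := s)
    (fun i _ => div_pos one_pos hn')
    (by rw [Finset.sum_const, Finset.card_univ, Fintype.card_fin, nsmul_eq_mul]; field_simp)
    (fun i _ => hs i)
    ⟨j, Finset.mem_univ j, k, Finset.mem_univ k, hjk⟩
  have hsum' : ∑ i, (1 / (n : ℝ)) • s i = n := by
    rw [← Finset.smul_sum, hsum, smul_eq_mul]; field_simp
  rw [hsum'] at jensen
  have hlog : Real.log (∏ i, s i) < Real.log ((n : ℝ) ^ n) := by
    rw [Real.log_prod (fun i _ => (hs i).ne'), Real.log_pow]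
    have := mul_lt_mul_of_pos_left jensen hn'
    calc ∑ i, Real.log (s i) = (n : ℝ) * ∑ i, (1 / (n : ℝ)) • Real.log (s i) := by
          rw [← Finset.smul_sum, smul_eq_mul]; field_simp
      _ < (n : ℝ) * Real.log n := this
  have h1 : (0 : ℝ) < ∏ i, s i := Finset.prod_pos fun i _ => hs i
  exact (Real.log_lt_log_iff h1 (by positivity)).mp hlog

lemma row_sums {n : ℕ} (hn : 2 ≤ n) (P : Matrix (Fin n) (Fin n) ℝ)
    (hpos : ∀ i j, 0 < P i j)
    (hsum : ∑ i, ∑ j, P i j = (n : ℝ) ^ 2)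
    (hrank : P.rank ≤ 2)
    (hmax : ∀ Q : Matrix (Fin n) (Fin n) ℝ,
      (∀ i j, 0 ≤ Q i j) → (∑ i, ∑ j, Q i j = (n : ℝ) ^ 2) → Q.rank ≤ 2 →
      swissL Q ≤ swissL P) :
    ∀ i, ∑ j, P i j = (n : ℝ) := by
  by_contra h
  push_neg at h
  obtain ⟨k, hk⟩ := h
  have hn0 : 0 < n := by omega
  have hn' : (0 : ℝ) < n := by exact_mod_cast hn0
  set s : Fin n → ℝ := fun i => ∑ j, P i j with hs_def
  have hs : ∀ i, 0 < s i := fun i => Finset.sum_pos (fun j _ => hpos i j) ⟨k, Finset.mem_univ k⟩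
  -- there is a j with s j ≠ s k
  have hne : ∃ j, s j ≠ s k := by
    by_contra hall
    push_neg at hall
    have h2 : ∑ i, s i = n * s k := by
      rw [Finset.sum_congr rfl fun i _ => hall i, Finset.sum_const, Finset.card_univ,
        Fintype.card_fin, nsmul_eq_mul]
    rw [hsum] at h2
    apply hk
    show s k = (n : ℝ)
    have : (n : ℝ) * s k = (n : ℝ) * n := by rw [← h2]; ring
    exact mul_left_cancel₀ hn'.ne' this
  obtain ⟨j, hj⟩ := hne
  set c : Fin n → ℝ := fun i => n / s i with hc_def
  have hc : ∀ i, 0 < c i := fun i => div_pos hn' (hs i)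
  have hcs : ∀ i, c i * s i = (n : ℝ) := fun i => div_mul_cancel₀ (n : ℝ) (hs i).ne'
  set Q : Matrix (Fin n) (Fin n) ℝ := Matrix.of fun i j => c i * P i j with hQ_def
  have hQpos : ∀ i j, 0 ≤ Q i j := fun i j => le_of_lt (by exact mul_pos (hc i) (hpos i j))
  have hQsum : ∑ i, ∑ j, Q i j = (n : ℝ) ^ 2 := by
    have : ∀ i, ∑ j, Q i j = (n : ℝ) := by
      intro i
      simp only [hQ_def, Matrix.of_apply, ← Finset.mul_sum]
      exact hcs i
    rw [Finset.sum_congr rfl fun i _ => this i, Finset.sum_const, Finset.card_univ,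
      Fintype.card_fin, nsmul_eq_mul]
    ring
  have hQrank : Q.rank ≤ 2 := by
    have : Q = Matrix.diagonal c * P := by
      ext i j
      simp [hQ_def, Matrix.diagonal_mul]
    rw [this]
    exact le_trans (Matrix.rank_mul_le_right _ _) hrank
  have hLpos : 0 < swissL P := by
    rw [swissL_eq]
    have h1 : 0 < ∏ i, P i i := Finset.prod_pos fun i _ => hpos i i
    have h2 : 0 < ∏ i, ∏ j, P i j :=
      Finset.prod_pos fun i _ => Finset.prod_pos fun j _ => hpos i j
    positivity
  have hprod : ∏ i, s i < (n : ℝ) ^ n := strict_amgm hn0 s hs hsum j k hj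
  have hcprod : 1 < ∏ i, c i := by
    have hps : 0 < ∏ i, s i := Finset.prod_pos fun i _ => hs i
    have : ∏ i, c i = (n : ℝ) ^ n / ∏ i, s i := by
      rw [hc_def, Finset.prod_div_distrib, Finset.prod_const, Finset.card_univ,
        Fintype.card_fin]
    rw [this]
    rw [lt_div_iff₀ hps, one_mul]
    exact hprod
  have hQL : swissL Q = (∏ i, c i) ^ (n + 1) * swissL P := swissL_row_smul c P
  have : swissL P < swissL Q := by
    rw [hQL]
    exact (lt_mul_iff_one_lt_left hLpos).2 (one_lt_pow₀ hcprod (Nat.succ_ne_zero n))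
  exact absurd (hmax Q hQpos hQsum hQrank) (not_le.mpr this)

theorem stmt_0 {n : ℕ} (hn : 2 ≤ n) (P : Matrix (Fin n) (Fin n) ℝ)
    (hpos : ∀ i j, 0 < P i j)
    (hsum : ∑ i, ∑ j, P i j = (n : ℝ) ^ 2)
    (hrank : P.rank ≤ 2)
    (hmax : ∀ Q : Matrix (Fin n) (Fin n) ℝ,
      (∀ i j, 0 ≤ Q i j) → (∑ i, ∑ j, Q i j = (n : ℝ) ^ 2) → Q.rank ≤ 2 →
      swissL Q ≤ swissL P) :
    (∀ i, ∑ j, P i j = (n : ℝ)) ∧ (∀ j, ∑ i, P i j = (n : ℝ)) := by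
  constructor
  · exact row_sums hn P hpos hsum hrank hmax
  · have hT : ∀ i, ∑ j, Pᵀ i j = (n : ℝ) := by
      apply row_sums hn Pᵀ (fun i j => hpos j i)
      · rw [Finset.sum_comm (f := Pᵀ)]; exact hsum
      · rw [Matrix.rank_transpose]; exact hrank
      · intro Q hQpos hQsum hQrank
        rw [← swissL_transpose Q, swissL_transpose P]
        apply hmax Qᵀ (fun i j => hQpos j i)
        · rw [Finset.sum_comm (f := Qᵀ)]; exact hQsum
        · rw [Matrix.rank_transpose]; exact hQrank
    intro jj
    exact hT jj
end

section
/- Let P be an n×n real matrix of rank at most 2 with all row sums and all column sums equal to n. Then there exist real vectors a = (a_1,…,a_n) and b = (b_1,…,b_n) such that p_ij = 1 + a_j b_i for all i,j, and (∑_i a_i)(∑_i b_i) = 0. -/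
open Finset

theorem stmt_2 {n : ℕ} (P : Matrix (Fin n) (Fin n) ℝ)
    (hrank : P.rank ≤ 2)
    (hrow : ∀ i, ∑ j, P i j = (n : ℝ))
    (hcol : ∀ j, ∑ i, P i j = (n : ℝ)) :
    ∃ a b : Fin n → ℝ,
      (∀ i j, P i j = 1 + a j * b i) ∧ (∑ i, a i) * (∑ i, b i) = 0 := by
  rcases Nat.eq_zero_or_pos n with hn | hn
  · subst hn
    exact ⟨0, 0, fun i j => i.elim0, by simp⟩
  have hn' : (n : ℝ) ≠ 0 := Nat.cast_ne_zero.mpr hn.ne'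
  -- Q = P - J
  set Q : Matrix (Fin n) (Fin n) ℝ := fun i j => P i j - 1 with hQ
  have hQrow : ∀ i, ∑ j, Q i j = 0 := by
    intro i; simp [hQ, Finset.sum_sub_distrib, hrow i]
  have hQcol : ∀ j, ∑ i, Q i j = 0 := by
    intro j; simp [hQ, Finset.sum_sub_distrib, hcol j]
  set S := LinearMap.range P.mulVecLin with hS
  have hones : (fun _ => (1:ℝ) : Fin n → ℝ) ∈ S := by
    refine ⟨(n : ℝ)⁻¹ • (fun _ => (1:ℝ) : Fin n → ℝ), ?_⟩
    simp only [Matrix.mulVecLin_apply]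
    funext i
    simp only [Matrix.mulVec, dotProduct, Pi.smul_apply, smul_eq_mul]
    rw [Finset.sum_congr rfl fun x _ => (by ring : P i x * ((n:ℝ)⁻¹ * 1) = (n:ℝ)⁻¹ * P i x),
      ← Finset.mul_sum, hrow i, inv_mul_cancel₀ hn']
  -- the sum-zero subspace
  let l : (Fin n → ℝ) →ₗ[ℝ] ℝ :=
    { toFun := fun v => ∑ i, v i
      map_add' := fun x y => by simp [Finset.sum_add_distrib]
      map_smul' := fun c x => by simp [Finset.mul_sum] }
  have hQrange : LinearMap.range Q.mulVecLin ≤ S ⊓ LinearMap.ker l := by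
    rintro _ ⟨x, rfl⟩
    constructor
    · -- Q.mulVec x = P.mulVec x - (∑ x) • 1
      refine ⟨x - (∑ j, x j) • ((n : ℝ)⁻¹ • (fun _ => (1:ℝ) : Fin n → ℝ)), ?_⟩
      simp only [Matrix.mulVecLin_apply]
      funext i
      simp only [Matrix.mulVec, dotProduct, Pi.sub_apply, Pi.smul_apply, smul_eq_mul, hQ]
      have : ∀ j : Fin n, P i j * (x j - (∑ k, x k) * ((n:ℝ)⁻¹ * 1))
          = P i j * x j - (∑ k, x k) * (n:ℝ)⁻¹ * P i j := fun j => by ring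
      rw [Finset.sum_congr rfl fun j _ => this j, Finset.sum_sub_distrib, ← Finset.mul_sum,
        hrow i, Finset.sum_congr rfl (fun j _ => show (P i j - 1) * x j = P i j * x j - x j
          from by ring), Finset.sum_sub_distrib]
      field_simp
    · simp only [LinearMap.mem_ker, Matrix.mulVecLin_apply, Matrix.mulVec, dotProduct]
      show ∑ i, ∑ j, Q i j * x j = 0
      rw [Finset.sum_comm]
      simp only [← Finset.sum_mul, hQcol, zero_mul, Finset.sum_const_zero]
  have hones_not : (fun _ => (1:ℝ) : Fin n → ℝ) ∉ (S ⊓ LinearMap.ker l) := by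
    intro h
    have h2 : l (fun _ => (1:ℝ)) = 0 := h.2
    simp only [l, LinearMap.coe_mk, AddHom.coe_mk, Finset.sum_const, Finset.card_univ,
      Fintype.card_fin, nsmul_eq_mul, mul_one] at h2
    exact hn' h2
  have hlt : (S ⊓ LinearMap.ker l) < S := lt_of_le_of_ne inf_le_left
    (fun h => hones_not (by rw [h]; exact hones))
  have hfin : Module.finrank ℝ (S ⊓ LinearMap.ker l : Submodule ℝ (Fin n → ℝ)) < 2 :=
    lt_of_lt_of_le (Submodule.finrank_lt_finrank_of_lt hlt) hrank
  have hr1 : Module.finrank ℝ (LinearMap.range Q.mulVecLin) ≤ 1 := by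
    have := Submodule.finrank_mono hQrange
    omega
  obtain ⟨⟨b, hbmem⟩, hb⟩ := finrank_le_one_iff.mp hr1
  -- columns of Q are multiples of b
  have hcolmul : ∀ j : Fin n, ∃ c : ℝ, ∀ i, Q i j = c * b i := by
    intro j
    have hmem : (fun i => Q i j) ∈ LinearMap.range Q.mulVecLin := by
      refine ⟨Pi.single j 1, ?_⟩
      funext i
      simp [Matrix.mulVecLin_apply, Matrix.mulVec_single]
    obtain ⟨c, hc⟩ := hb ⟨_, hmem⟩
    refine ⟨c, fun i => ?_⟩
    have := congrArg (fun v : LinearMap.range Q.mulVecLin => (v : Fin n → ℝ) i) hc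
    simpa using this.symm
  choose a ha using hcolmul
  refine ⟨a, b, fun i j => ?_, ?_⟩
  · have := ha j i
    simp only [hQ] at this
    linarith
  · have h0 : ∑ i, ∑ j, Q i j = 0 := by simp [hQrow]
    have : ∑ i, ∑ j, Q i j = (∑ j, a j) * (∑ i, b i) := by
      rw [Finset.sum_comm]
      refine (Finset.sum_congr rfl fun j _ => Finset.sum_congr rfl fun i _ => ha j i).trans ?_
      rw [Finset.sum_mul]
      congr 1
      funext j
      rw [Finset.mul_sum]
    rw [← this, h0]
end

section
/- Let P be an n×n matrix with positive entries of the form p_ij = 1 + a_j b_i maximizing L(P) = ∏_i p_ii² ∏_{i≠j} p_ij over matrices of this form with fixed a-vector and with b-vectors that are permutations of (b_1,…,b_n). Then for all i, j: a_i > a_j implies b_i ≥ b_j. -/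
open Finset

lemma swissL_perm {n : ℕ} (a b : Fin n → ℝ) (σ : Equiv.Perm (Fin n)) :
    swissL (Matrix.of fun i j => 1 + a j * b (σ i)) =
      (∏ j, ∏ i, (1 + a j * b i)) * ∏ k, (1 + a k * b (σ k)) := by
  unfold swissL
  simp only [Matrix.of_apply]
  have hall : ∏ p ∈ (univ : Finset (Fin n)) ×ˢ univ, (1 + a p.2 * b (σ p.1)) =
      (∏ i, (1 + a i * b (σ i))) * ∏ p ∈ (univ : Finset (Fin n)).offDiag, (1 + a p.2 * b (σ p.1)) := by
    rw [← Finset.diag_union_offDiag, Finset.prod_union (Finset.disjoint_diag_offDiag _),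
      Finset.prod_diag]
  have hall2 : ∏ p ∈ (univ : Finset (Fin n)) ×ˢ univ, (1 + a p.2 * b (σ p.1)) =
      ∏ j, ∏ i, (1 + a j * b i) := by
    rw [Finset.prod_product, Finset.prod_comm]
    exact Finset.prod_congr rfl fun j _ => Equiv.prod_comp σ fun i => 1 + a j * b i
  have := hall2.symm.trans hall
  calc (∏ i, (1 + a i * b (σ i)) ^ 2) * ∏ p ∈ (univ : Finset (Fin n)).offDiag, (1 + a p.2 * b (σ p.1))
      = (∏ k, (1 + a k * b (σ k))) * ((∏ i, (1 + a i * b (σ i))) * ∏ p ∈ (univ : Finset (Fin n)).offDiag, (1 + a p.2 * b (σ p.1))) := by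
        simp only [sq]
        rw [Finset.prod_mul_distrib]
        ring
      _ = (∏ j, ∏ i, (1 + a j * b i)) * ∏ k, (1 + a k * b (σ k)) := by
        rw [← this, mul_comm]

theorem stmt_10 {n : ℕ} (a b : Fin n → ℝ)
    (hpos : ∀ i j, 0 < 1 + a j * b i)
    (hmax : ∀ σ : Equiv.Perm (Fin n),
      swissL (Matrix.of fun i j => 1 + a j * b (σ i)) ≤
      swissL (Matrix.of fun i j => 1 + a j * b i)) :
    ∀ i j, a i > a j → b i ≥ b j := by
  intro i j hij
  by_contra hb
  push_neg at hb
  have hne : i ≠ j := fun h => absurd (h ▸ hij) (lt_irrefl _)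
  have h1 := hmax (Equiv.swap i j)
  have h2 := hmax (Equiv.refl _)
  rw [swissL_perm a b (Equiv.swap i j)] at h1
  have hid : swissL (Matrix.of fun i j => 1 + a j * b i) =
      (∏ j, ∏ i, (1 + a j * b i)) * ∏ k, (1 + a k * b k) := by
    simpa using swissL_perm a b (Equiv.refl _)
  rw [hid] at h1
  have hC : 0 < ∏ j, ∏ i, (1 + a j * b i) :=
    Finset.prod_pos fun j _ => Finset.prod_pos fun i _ => hpos i j
  rw [mul_comm ((∏ j, ∏ i, (1 + a j * b i))) _, mul_comm ((∏ j, ∏ i, (1 + a j * b i))) _,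
    mul_le_mul_iff_left₀ hC] at h1
  -- now ∏ k, (1+a k * b (swap i j k)) ≤ ∏ k, (1+a k * b k)
  have hsplit : ∀ c : Fin n → ℝ, ∏ k, c k = c i * (c j * ∏ k ∈ (univ.erase i).erase j, c k) := by
    intro c
    rw [← Finset.prod_erase_mul _ _ (mem_univ i)]
    rw [← Finset.prod_erase_mul _ _ (Finset.mem_erase.mpr ⟨hne.symm, mem_univ j⟩)]
    ring
  rw [hsplit, hsplit (fun k => 1 + a k * b k)] at h1
  have hrest : ∏ k ∈ (univ.erase i).erase j, (fun k => 1 + a k * b (Equiv.swap i j k)) k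
      = ∏ k ∈ (univ.erase i).erase j, (1 + a k * b k) := by
    apply Finset.prod_congr rfl
    intro k hk
    simp only [Finset.mem_erase] at hk
    show 1 + a k * b ((Equiv.swap i j) k) = _
    rw [Equiv.swap_apply_of_ne_of_ne hk.2.1 hk.1]
  simp only [Equiv.swap_apply_left, Equiv.swap_apply_right] at h1 hrest
  rw [hrest] at h1
  have hrpos : 0 < ∏ k ∈ (univ.erase i).erase j, (1 + a k * b k) :=
    Finset.prod_pos fun k _ => hpos k k
  have key : (1 + a i * b j) * (1 + a j * b i) ≤ (1 + a i * b i) * (1 + a j * b j) := by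
    have := h1
    rw [← mul_assoc, ← mul_assoc] at this
    exact le_of_mul_le_mul_right this hrpos
  nlinarith [hpos i i, hpos j j]
end

section
/- Let A_1 ≥ A_2 ≥ 1 and A_3 ≥ A_4 > 0 be reals with A_1 + A_2 + A_3 + A_4 = 4 and 2/A_1 + 1/A_2 + 1/A_3 + 1/A_4 = 5. Then A_1 ≤ 3/2. -/
theorem stmt_11 (A₁ A₂ A₃ A₄ : ℝ)
    (h12 : A₂ ≤ A₁) (h2 : 1 ≤ A₂) (h34 : A₄ ≤ A₃) (h4 : 0 < A₄)
    (hsum : A₁ + A₂ + A₃ + A₄ = 4)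
    (heq : 2 / A₁ + 1 / A₂ + 1 / A₃ + 1 / A₄ = 5) :
    A₁ ≤ 3 / 2 := by
  have h3 : 0 < A₃ := lt_of_lt_of_le h4 h34
  have h1 : (1:ℝ) ≤ A₁ := le_trans h2 h12
  have hA1 : (0:ℝ) < A₁ := by linarith
  have hA2 : (0:ℝ) < A₂ := by linarith
  have hs : 0 < A₃ + A₄ := by linarith
  have hA1lt3 : A₁ < 3 := by linarith
  have hslt2 : A₃ + A₄ ≤ 2 := by linarith
  have hamgm : 4 / (A₃ + A₄) ≤ 1 / A₃ + 1 / A₄ := by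
    rw [div_add_div _ _ (ne_of_gt h3) (ne_of_gt h4), div_le_div_iff₀ hs (by positivity)]
    nlinarith [sq_nonneg (A₃ - A₄)]
  have hseq : A₃ + A₄ = 4 - A₁ - A₂ := by linarith
  have hmain : 2 / A₁ + 1 / A₂ + 4 / (4 - A₁ - A₂) ≤ 5 := by
    rw [← hseq]; linarith
  have hs' : 0 < 4 - A₁ - A₂ := by linarith
  have h3A1 : 0 < 3 - A₁ := by linarith
  have hmono : 1 + 4 / (3 - A₁) ≤ 1 / A₂ + 4 / (4 - A₁ - A₂) := by
    rw [show (1:ℝ) + 4 / (3 - A₁) = (7 - A₁) / (3 - A₁) by field_simp; ring,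
      div_add_div _ _ (ne_of_gt hA2) (ne_of_gt hs'), div_le_div_iff₀ h3A1 (by positivity)]
    have haux : (4 - A₁ - A₂) * (3 - A₁) ≤ 4 * A₂ := by nlinarith
    nlinarith [mul_nonneg (sub_nonneg.2 h2) (sub_nonneg.2 haux)]
  have hfin : 2 / A₁ + 1 + 4 / (3 - A₁) ≤ 5 := by linarith
  rw [div_add' _ _ _ (ne_of_gt hA1)] at hfin
  rw [div_add_div _ _ (ne_of_gt hA1) (ne_of_gt h3A1), div_le_iff₀ (by positivity)] at hfin
  nlinarith [hfin, mul_pos hA1 h3A1]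
end

section
/- Let A_1 ≥ A_2 ≥ 1 and A_3 ≥ A_4 > 0 be reals with A_1 + A_2 + A_3 + A_4 = 4 and 2/A_1 + 1/A_2 + 1/A_3 + 1/A_4 = 5. Then A_2 ≤ 6/5. -/
theorem stmt_12 (A₁ A₂ A₃ A₄ : ℝ)
    (h12 : A₂ ≤ A₁) (h2 : 1 ≤ A₂) (h34 : A₄ ≤ A₃) (h4 : 0 < A₄)
    (hsum : A₁ + A₂ + A₃ + A₄ = 4)
    (heq : 2 / A₁ + 1 / A₂ + 1 / A₃ + 1 / A₄ = 5) :
    A₂ ≤ 6 / 5 := by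
  by_contra hc
  push_neg at hc
  have hA2 : (0:ℝ) < A₂ := by linarith
  have hA1 : (0:ℝ) < A₁ := by linarith
  have hA3 : (0:ℝ) < A₃ := lt_of_lt_of_le h4 h34
  have ht : (0:ℝ) < A₃ + A₄ := by linarith
  have hpoly : 2*(A₂*A₃*A₄) + A₁*A₃*A₄ + A₁*A₂*A₄ + A₁*A₂*A₃ = 5*(A₁*A₂*A₃*A₄) := by
    field_simp at heq
    nlinarith [heq]
  have hp : (0:ℝ) < A₃ * A₄ := mul_pos hA3 h4
  have hamgm : A₃ * A₄ ≤ (A₃ + A₄)^2 / 4 := by nlinarith [sq_nonneg (A₃ - A₄)]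
  set t : ℝ := A₃ + A₄ with htdef
  have htval : t = 4 - A₁ - A₂ := by linarith
  -- from hpoly: (A₃*A₄)*(5*A₁*A₂ - 2*A₂ - A₁) = A₁*A₂*t
  have hfac : (A₃*A₄)*(5*A₁*A₂ - 2*A₂ - A₁) = A₁*A₂*t := by
    simp only [htdef]; nlinarith [hpoly]
  have hcoef : 0 < 5*A₁*A₂ - 2*A₂ - A₁ := by
    by_contra hcc
    push_neg at hcc
    nlinarith [mul_pos (mul_pos hA1 hA2) ht, mul_nonpos_of_nonneg_of_nonpos (le_of_lt hp) hcc]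
  have hineq : 4*(A₁*A₂) ≤ t*(5*A₁*A₂ - 2*A₂ - A₁) := by
    have := mul_le_mul_of_nonneg_right hamgm (le_of_lt hcoef)
    nlinarith [this, hfac, ht]
  have ht4 : t = 4 - A₁ - A₂ := htval
  nlinarith [hineq, ht, mul_pos (sub_pos.mpr hc) (sub_pos.mpr (lt_of_lt_of_le hc h12)),
    sq_nonneg (A₁ - A₂), mul_pos hA1 hA2, sq_nonneg (A₁ + A₂ - 12/5),
    mul_pos ht (mul_pos (sub_pos.mpr hc) (sub_pos.mpr (lt_of_lt_of_le hc h12)))]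
end

section
/- Let a_1, a_2, a_3, a_4 be reals with a_1 + a_2 + a_3 + a_4 = 0 and 1 + a_i a_j > 0 for all i,j, satisfying ∑_{j=1}^4 1/(1 + a_i a_j) + 1/(1 + a_i²) = 5 for each i = 1,…,4. Then for any i, j with a_i a_j > 0, we have a_i = a_j. -/
open Finset

lemma contra_lemma (x q g : ℝ) (hq : 0 < q) (h4q : 4*q ≤ x) (h4g : 4*g ≤ x)
    (he2 : 2*g*(1+q) = 2+6*q-4*q^2-2*x)
    (he1 : (1+2*q-3*q^2-x) - 2*x*(1+q) + g*(5*(1+q)*(1+x-2*q+q^2) - (3+x-2*q-q^2)) = 0) :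
    False := by
  have hx : 0 < x := lt_of_lt_of_le (by linarith) h4q
  have hC2 : 4+12*q-8*q^2 ≤ x*(5+q) := by
    nlinarith [mul_nonneg (sub_nonneg.mpr h4g) hq.le]
  have hpsi : 3+6*q-18*q^2-4*q^3+23*q^4-10*q^5 - x+15*x*q+9*x*q^2-15*x*q^3 -4*x^2-5*x^2*q = 0 := by
    linear_combination (1+q)*he1 - (5*(1+q)*(1+x-2*q+q^2) - (3+x-2*q-q^2))/2*he2
  rcases le_or_gt q (1/3) with hq3 | hq3
  · have hsl : 0 ≤ (5+q)*x - (4+12*q-8*q^2) := by nlinarith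
    have key : (-9-48*q-19*q^2-42*q^3-111*q^4+4*q^5+43*q^6-10*q^7)
        + (-37-62*q+4*q^2+14*q^3-15*q^4) * ((5+q)*x - (4+12*q-8*q^2))
        - (4+5*q) * ((5+q)*x - (4+12*q-8*q^2))^2 = 0 := by
      linear_combination (5+q)^2 * hpsi
    nlinarith [key, hsl, mul_nonneg hsl hq.le, sq_nonneg ((5+q)*x - (4+12*q-8*q^2)),
      mul_nonneg (mul_nonneg hsl hq.le) hq.le, mul_pos hq hq,
      mul_pos (mul_pos hq hq) hq, mul_pos (mul_pos (mul_pos hq hq) hq) hq,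
      mul_nonneg (sq_nonneg ((5+q)*x - (4+12*q-8*q^2))) hq.le]
  · have hsl2 : 0 ≤ x - 4*q := by linarith
    have key : (3+2*q-22*q^2-48*q^3-37*q^4-10*q^5)
        - (1+17*q+31*q^2+15*q^3) * (x-4*q) - (4+5*q) * (x-4*q)^2 = 0 := by
      linear_combination hpsi
    nlinarith [key, hsl2, mul_nonneg hsl2 hq.le, sq_nonneg (x-4*q),
      mul_pos hq hq, mul_pos (mul_pos hq hq) hq,
      mul_nonneg (sq_nonneg (x-4*q)) hq.le, mul_nonneg (mul_nonneg hsl2 hq.le) hq.le]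


set_option maxHeartbeats 1000000 in
lemma clear1 (u v s t : ℝ) (hdu : (0:ℝ) < 1+u^2) (hduv : (0:ℝ) < 1+u*v)
    (hus : (0:ℝ) < 1+u*s) (hut : (0:ℝ) < 1+u*t)
    (h1 : 1/(1+u^2) + 1/(1+u*v) + 1/(1+u*s) + 1/(1+u*t) + 1/(1+u^2) = 5) :
    2*(1+u*v)*(1+u*s)*(1+u*t) + (1+u^2)*(1+u*s)*(1+u*t) + (1+u^2)*(1+u*v)*(1+u*t)
      + (1+u^2)*(1+u*v)*(1+u*s) - 5*(1+u^2)*(1+u*v)*(1+u*s)*(1+u*t) = 0 := by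
  have e : 2*(1+u*v)*(1+u*s)*(1+u*t) + (1+u^2)*(1+u*s)*(1+u*t) + (1+u^2)*(1+u*v)*(1+u*t)
      + (1+u^2)*(1+u*v)*(1+u*s) - 5*(1+u^2)*(1+u*v)*(1+u*s)*(1+u*t)
      = (1/(1+u^2) + 1/(1+u*v) + 1/(1+u*s) + 1/(1+u*t) + 1/(1+u^2) - 5)
        * ((1+u^2)*(1+u*v)*(1+u*s)*(1+u*t)) := by
    field_simp
    ring
  rw [e, h1]
  ring

set_option maxHeartbeats 1000000 in
lemma key1_lemma (u v s t : ℝ) (hz : u + v + s + t = 0)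
    (h1p : 2*(1+u*v)*(1+u*s)*(1+u*t) + (1+u^2)*(1+u*s)*(1+u*t) + (1+u^2)*(1+u*v)*(1+u*t)
      + (1+u^2)*(1+u*v)*(1+u*s) - 5*(1+u^2)*(1+u*v)*(1+u*s)*(1+u*t) = 0)
    (h2p : 2*(1+u*v)*(1+v*s)*(1+v*t) + (1+v^2)*(1+v*s)*(1+v*t) + (1+v^2)*(1+u*v)*(1+v*t)
      + (1+v^2)*(1+u*v)*(1+v*s) - 5*(1+v^2)*(1+u*v)*(1+v*s)*(1+v*t) = 0) :
    (2*u*v*(v-u)*(1+u*s)*(1+u*t)*(1+v*s)*(1+v*t)) *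
      ((1-u^2-v^2-3*u^2*v^2) - 2*(u+v)^2*(1+u*v)
        + s*t*(5*(1+u*v)*(1+u^2)*(1+v^2) - (3+u^2+v^2-u^2*v^2))) = 0 := by
  linear_combination
    (-(v*(1+v^2)*(1+v*s)*(1+v*t)*(-2 + 2*(u+v)*u + s*t*u*(v-u) - s*t*(u+v)*u - 2*u*(u+v+s+t)))) * h1p
    + (-(u*(1+u^2)*(1+u*s)*(1+u*t)*(2 - 2*(u+v)*v + s*t*v*(v-u) + s*t*(u+v)*v + 2*v*(u+v+s+t)))) * h2p
    + (-4*(u+v)*u*v*(v-u)*(1+u*v)*(1+u*s)*(1+u*t)*(1+v*s)*(1+v*t)) * hz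

set_option maxHeartbeats 1000000 in
lemma key2_lemma (u v s t : ℝ) (hz : u + v + s + t = 0)
    (h1p : 2*(1+u*v)*(1+u*s)*(1+u*t) + (1+u^2)*(1+u*s)*(1+u*t) + (1+u^2)*(1+u*v)*(1+u*t)
      + (1+u^2)*(1+u*v)*(1+u*s) - 5*(1+u^2)*(1+u*v)*(1+u*s)*(1+u*t) = 0)
    (h2p : 2*(1+u*v)*(1+v*s)*(1+v*t) + (1+v^2)*(1+v*s)*(1+v*t) + (1+v^2)*(1+u*v)*(1+v*t)
      + (1+v^2)*(1+u*v)*(1+v*s) - 5*(1+v^2)*(1+u*v)*(1+v*s)*(1+v*t) = 0) :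
    (u^2*v^2*(v-u)*(1+u*s)*(1+u*t)*(1+v*s)*(1+v*t)*(u+v)) *
      (2+2*u*v-2*u^2-2*v^2-4*u^2*v^2-2*s*t*(1+u*v)) = 0 := by
  linear_combination
    (-(v^2*(1+v^2)*(1+v*s)*(1+v*t)*(1 - (u+v)*u + s*t*u^2 + u*(u+v+s+t)))) * h1p
    + (-(u^2*(1+u^2)*(1+u*s)*(1+u*t)*(-1 + (u+v)*v - s*t*v^2 - v*(u+v+s+t)))) * h2p
    + (-(u*v*(v-u)*(1+u*v)*(1+u^2)*(1+v^2)*(1+u*s)*(1+u*t)*(1+v*s)*(1+v*t))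
       + u^2*v^2*(v-u)*(1+u*s)*(1+u*t)*(1+v*s)*(1+v*t)*(1-u^2-v^2-3*u^2*v^2)) * hz

set_option maxHeartbeats 16000000 in
lemma main_lemma (u v s t : ℝ) (hz : u + v + s + t = 0) (huv : 0 < u * v)
    (h1 : 1/(1+u*u) + 1/(1+u*v) + 1/(1+u*s) + 1/(1+u*t) + 1/(1+u^2) = 5)
    (h2 : 1/(1+v*u) + 1/(1+v*v) + 1/(1+v*s) + 1/(1+v*t) + 1/(1+v^2) = 5)
    (hus : 0 < 1+u*s) (hut : 0 < 1+u*t) (hvs : 0 < 1+v*s) (hvt : 0 < 1+v*t)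
    (hne : u ≠ v) : False := by
  have hu : u ≠ 0 := by rintro rfl; simp at huv
  have hv : v ≠ 0 := by rintro rfl; simp at huv
  have hvu : v - u ≠ 0 := sub_ne_zero.mpr (Ne.symm hne)
  have hsig : u + v ≠ 0 := by
    intro h
    have hv' : v = -u := by linarith
    rw [hv'] at huv
    nlinarith [sq_nonneg u]
  have hdu : (0:ℝ) < 1 + u^2 := by positivity
  have hdv : (0:ℝ) < 1 + v^2 := by positivity
  have hduv : (0:ℝ) < 1 + u*v := by linarith
  have hduv' : (0:ℝ) < 1 + v*u := by linarith [mul_comm u v, hduv]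
  rw [show (1+u*u) = (1+u^2) by ring] at h1
  rw [show (1+v*v) = (1+v^2) by ring] at h2
  have h1' : 1/(1+u^2) + 1/(1+u*v) + 1/(1+u*s) + 1/(1+u*t) + 1/(1+u^2) = 5 := by
    linarith [h1]
  have h2' : 1/(1+v^2) + 1/(1+v*u) + 1/(1+v*s) + 1/(1+v*t) + 1/(1+v^2) = 5 := by
    linarith [h2]
  have h1p := clear1 u v s t hdu hduv hus hut h1'
  have h2q := clear1 v u s t hdv hduv' hvs hvt h2'
  have h2p : 2*(1+u*v)*(1+v*s)*(1+v*t) + (1+v^2)*(1+v*s)*(1+v*t) + (1+v^2)*(1+u*v)*(1+v*t)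
      + (1+v^2)*(1+u*v)*(1+v*s) - 5*(1+v^2)*(1+u*v)*(1+v*s)*(1+v*t) = 0 := by
    linear_combination h2q
  have key1 := key1_lemma u v s t hz h1p h2p
  have key2 := key2_lemma u v s t hz h1p h2p
  have hF1 : (2*u*v*(v-u)*(1+u*s)*(1+u*t)*(1+v*s)*(1+v*t)) ≠ 0 :=
    mul_ne_zero (mul_ne_zero (mul_ne_zero (mul_ne_zero (mul_ne_zero (mul_ne_zero
      (mul_ne_zero two_ne_zero hu) hv) hvu) hus.ne') hut.ne') hvs.ne') hvt.ne'
  have hF2 : (u^2*v^2*(v-u)*(1+u*s)*(1+u*t)*(1+v*s)*(1+v*t)*(u+v)) ≠ 0 :=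
    mul_ne_zero (mul_ne_zero (mul_ne_zero (mul_ne_zero (mul_ne_zero (mul_ne_zero (mul_ne_zero
      (pow_ne_zero 2 hu) (pow_ne_zero 2 hv)) hvu) hus.ne') hut.ne') hvs.ne') hvt.ne') hsig
  have hE1 : (1-u^2-v^2-3*u^2*v^2) - 2*(u+v)^2*(1+u*v)
      + s*t*(5*(1+u*v)*(1+u^2)*(1+v^2) - (3+u^2+v^2-u^2*v^2)) = 0 :=
    (mul_eq_zero.mp key1).resolve_left hF1
  have hE2 : 2+2*u*v-2*u^2-2*v^2-4*u^2*v^2-2*s*t*(1+u*v) = 0 :=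
    (mul_eq_zero.mp key2).resolve_left hF2
  have h4q : 4*(u*v) ≤ (u+v)^2 := by nlinarith [sq_nonneg (u-v)]
  have h4g : 4*(s*t) ≤ (u+v)^2 := by
    have h' : u + v = -(s+t) := by linarith
    rw [h']
    nlinarith [sq_nonneg (s-t)]
  have he2' : 2*(s*t)*(1+u*v) = 2+6*(u*v)-4*(u*v)^2-2*(u+v)^2 := by
    linear_combination -hE2
  have he1' : (1+2*(u*v)-3*(u*v)^2-(u+v)^2) - 2*(u+v)^2*(1+u*v)
      + (s*t)*(5*(1+u*v)*(1+(u+v)^2-2*(u*v)+(u*v)^2) - (3+(u+v)^2-2*(u*v)-(u*v)^2)) = 0 := by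
    linear_combination hE1
  exact contra_lemma ((u+v)^2) (u*v) (s*t) huv h4q h4g he2' he1'

theorem stmt_15 (a : Fin 4 → ℝ)
    (hsum : ∑ i, a i = 0)
    (hpos : ∀ i j, 0 < 1 + a i * a j)
    (heq : ∀ i, (∑ j, 1 / (1 + a i * a j)) + 1 / (1 + (a i) ^ 2) = 5) :
    ∀ i j, 0 < a i * a j → a i = a j := by
  have hs4 : a 0 + a 1 + a 2 + a 3 = 0 := by
    have := hsum
    rw [Fin.sum_univ_four] at this
    exact this
  have hq4 : ∀ i, 1/(1+a i*a 0) + 1/(1+a i*a 1) + 1/(1+a i*a 2) + 1/(1+a i*a 3)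
      + 1/(1+(a i)^2) = 5 := by
    intro i
    have := heq i
    rw [Fin.sum_univ_four] at this
    exact this
  intro i j hij
  by_contra hne
  fin_cases i <;> fin_cases j
  · exact hne rfl
  · exact main_lemma (a 0) (a 1) (a 2) (a 3) (by linarith) hij
      (by linarith [hq4 0]) (by linarith [hq4 1]) (hpos 0 2) (hpos 0 3) (hpos 1 2) (hpos 1 3) hne
  · exact main_lemma (a 0) (a 2) (a 1) (a 3) (by linarith) hij
      (by linarith [hq4 0]) (by linarith [hq4 2]) (hpos 0 1) (hpos 0 3) (hpos 2 1) (hpos 2 3) hne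
  · exact main_lemma (a 0) (a 3) (a 1) (a 2) (by linarith) hij
      (by linarith [hq4 0]) (by linarith [hq4 3]) (hpos 0 1) (hpos 0 2) (hpos 3 1) (hpos 3 2) hne
  · exact main_lemma (a 1) (a 0) (a 2) (a 3) (by linarith) hij
      (by linarith [hq4 1]) (by linarith [hq4 0]) (hpos 1 2) (hpos 1 3) (hpos 0 2) (hpos 0 3) hne
  · exact hne rfl
  · exact main_lemma (a 1) (a 2) (a 0) (a 3) (by linarith) hij
      (by linarith [hq4 1]) (by linarith [hq4 2]) (hpos 1 0) (hpos 1 3) (hpos 2 0) (hpos 2 3) hne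
  · exact main_lemma (a 1) (a 3) (a 0) (a 2) (by linarith) hij
      (by linarith [hq4 1]) (by linarith [hq4 3]) (hpos 1 0) (hpos 1 2) (hpos 3 0) (hpos 3 2) hne
  · exact main_lemma (a 2) (a 0) (a 1) (a 3) (by linarith) hij
      (by linarith [hq4 2]) (by linarith [hq4 0]) (hpos 2 1) (hpos 2 3) (hpos 0 1) (hpos 0 3) hne
  · exact main_lemma (a 2) (a 1) (a 0) (a 3) (by linarith) hij
      (by linarith [hq4 2]) (by linarith [hq4 1]) (hpos 2 0) (hpos 2 3) (hpos 1 0) (hpos 1 3) hne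
  · exact hne rfl
  · exact main_lemma (a 2) (a 3) (a 0) (a 1) (by linarith) hij
      (by linarith [hq4 2]) (by linarith [hq4 3]) (hpos 2 0) (hpos 2 1) (hpos 3 0) (hpos 3 1) hne
  · exact main_lemma (a 3) (a 0) (a 1) (a 2) (by linarith) hij
      (by linarith [hq4 3]) (by linarith [hq4 0]) (hpos 3 1) (hpos 3 2) (hpos 0 1) (hpos 0 2) hne
  · exact main_lemma (a 3) (a 1) (a 0) (a 2) (by linarith) hij
      (by linarith [hq4 3]) (by linarith [hq4 1]) (hpos 3 0) (hpos 3 2) (hpos 1 0) (hpos 1 2) hne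
  · exact main_lemma (a 3) (a 2) (a 0) (a 1) (by linarith) hij
      (by linarith [hq4 3]) (by linarith [hq4 2]) (hpos 3 0) (hpos 3 1) (hpos 2 0) (hpos 2 1) hne
  · exact hne rfl
end
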